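/- The prepotential F₀(t₀,t₁) = (1/2)·t₀²·t₁ + (1/2)·(1+t₁)²·log(1+t₁) − (1/2)·t₁ − (3/4)·t₁² is quasihomogeneous with respect to the Euler vector field E = t₀ ∂/∂t₀ + 2(1+t₁) ∂/∂t₁: for all real t₀ and all real t₁ > −1, t₀ · ∂F₀/∂t₀ (t₀,t₁) + 2·(1+t₁) · ∂F₀/∂t₁ (t₀,t₁) = 4·F₀(t₀,t₁) + t₁² + t₀². -/

import Mathlib

/-- The prepotential of the CohFT assembled from the genus-zero discrete
volumes `N_{0,s}(0,…,0) = (-1)^{s-3}(s-3)!`. -/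
noncomputable def prepotentialF₀ (t₀ t₁ : ℝ) : ℝ :=
  (1 / 2) * t₀ ^ 2 * t₁ + (1 / 2) * (1 + t₁) ^ 2 * Real.log (1 + t₁)
    - (1 / 2) * t₁ - (3 / 4) * t₁ ^ 2

/-- Quasihomogeneity of the prepotential with respect to the Euler vector field
`E = t₀ ∂/∂t₀ + 2(1+t₁) ∂/∂t₁`: `E · F₀ = 4 F₀ + t₁² + t₀²` for all `t₀` and all
`t₁ > -1`. -/
theorem prepotentialF₀_quasihomogeneous
    (t₀ t₁ : ℝ) (h : -1 < t₁) :
    t₀ * deriv (fun s => prepotentialF₀ s t₁) t₀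
        + 2 * (1 + t₁) * deriv (fun s => prepotentialF₀ t₀ s) t₁ =
      4 * prepotentialF₀ t₀ t₁ + t₁ ^ 2 + t₀ ^ 2 := by
  have hne : (1 : ℝ) + t₁ ≠ 0 := by linarith
  have h1 : HasDerivAt (fun s => prepotentialF₀ s t₁) (t₀ * t₁) t₀ := by
    have h1' : HasDerivAt (fun s : ℝ => (1 / 2) * s ^ 2 * t₁
        + (1 / 2) * (1 + t₁) ^ 2 * Real.log (1 + t₁)
        - (1 / 2) * t₁ - (3 / 4) * t₁ ^ 2)
        ((1 / 2) * ((2 : ℕ) * t₀ ^ (2 - 1)) * t₁ + 0 - 0 - 0) t₀ :=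
      ((((hasDerivAt_pow 2 t₀).const_mul (1/2 : ℝ)).mul_const t₁).add
        (hasDerivAt_const _ _)).sub (hasDerivAt_const _ _) |>.sub (hasDerivAt_const _ _)
    have : HasDerivAt (fun s => prepotentialF₀ s t₁)
        ((1 / 2) * ((2 : ℕ) * t₀ ^ (2 - 1)) * t₁ + 0 - 0 - 0) t₀ := h1'
    convert this using 1
    push_cast
    ring
  have hlog : HasDerivAt (fun s : ℝ => Real.log (1 + s)) (1 / (1 + t₁)) t₁ := by
    simpa using (((hasDerivAt_id t₁).const_add 1).log hne)
  have hsq : HasDerivAt (fun s : ℝ => (1 + s) ^ 2) (2 * (1 + t₁)) t₁ := by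
    simpa using ((hasDerivAt_id t₁).const_add 1).fun_pow 2
  have h2 : HasDerivAt (fun s => prepotentialF₀ t₀ s)
      ((1 / 2) * t₀ ^ 2 + ((1 / 2) * (2 * (1 + t₁)) * Real.log (1 + t₁)
        + (1 / 2) * (1 + t₁) ^ 2 * (1 / (1 + t₁))) - 1 / 2 - (3 / 4) * (2 * t₁)) t₁ := by
    have hA : HasDerivAt (fun s : ℝ => (1 / 2) * t₀ ^ 2 * s) ((1 / 2) * t₀ ^ 2) t₁ := by
      simpa using (hasDerivAt_id t₁).const_mul ((1 / 2) * t₀ ^ 2)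
    have hB : HasDerivAt (fun s : ℝ => (1 / 2) * (1 + s) ^ 2 * Real.log (1 + s))
        ((1 / 2) * (2 * (1 + t₁)) * Real.log (1 + t₁)
          + (1 / 2) * (1 + t₁) ^ 2 * (1 / (1 + t₁))) t₁ := by
      simpa [mul_assoc] using (hsq.const_mul (1 / 2 : ℝ)).fun_mul hlog
    have hC : HasDerivAt (fun s : ℝ => (1 / 2) * s) (1 / 2 : ℝ) t₁ := by
      simpa using (hasDerivAt_id t₁).const_mul (1 / 2 : ℝ)
    have hD : HasDerivAt (fun s : ℝ => (3 / 4) * s ^ 2) ((3 / 4) * (2 * t₁)) t₁ := by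
      simpa using (hasDerivAt_pow 2 t₁).const_mul (3 / 4 : ℝ)
    exact ((hA.add hB).sub hC).sub hD
  rw [h1.deriv, h2.deriv, prepotentialF₀]
  field_simp
  ring
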